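/- If A is a maximum independent set of a graph G and M is a maximum matching of G, then the union (in the subdivision graph S(G)) of the original vertices corresponding to A and the subdivision vertices corresponding to the edges of M is an open packing of S(G); hence ρ°(S(G)) ≥ α(G) + α'(G). -/

import Mathlib

variable {V : Type*}

/-- A set of vertices is an open packing if the open neighborhoods of distinct
vertices in it are pairwise disjoint. -/
def IsOpenPacking (G : SimpleGraph V) (S : Set V) : Prop :=
  S.Pairwise fun u v => Disjoint (G.neighborSet u) (G.neighborSet v)

/-- The open packing number: the maximum cardinality of an open packing. -/
noncomputable def openPackingNumber (G : SimpleGraph V) : ℕ :=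
  sSup {n | ∃ S : Finset V, IsOpenPacking G ↑S ∧ S.card = n}

/-- `U` is the unique maximum open packing of `G`. -/
def HasUniqueMaxOpenPacking (G : SimpleGraph V) (U : Finset V) : Prop :=
  IsOpenPacking G ↑U ∧ U.card = openPackingNumber G ∧
    ∀ S : Finset V, IsOpenPacking G ↑S → S.card = openPackingNumber G → S = U

/-- A set of vertices is independent if no two of its vertices are adjacent. -/
def IsIndepVSet (G : SimpleGraph V) (S : Set V) : Prop :=
  S.Pairwise fun u v => ¬ G.Adj u v

/-- The independence number of a graph. -/
noncomputable def indepNumber (G : SimpleGraph V) : ℕ :=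
  sSup {n | ∃ S : Finset V, IsIndepVSet G ↑S ∧ S.card = n}

/-- A set of edges is a matching if the edges are pairwise disjoint. -/
def IsMatchingSet (G : SimpleGraph V) (M : Set (Sym2 V)) : Prop :=
  M ⊆ G.edgeSet ∧ M.Pairwise fun e f => ∀ v : V, v ∈ e → v ∉ f

/-- The matching number of a graph. -/
noncomputable def matchingNumber (G : SimpleGraph V) : ℕ :=
  sSup {n | ∃ M : Finset (Sym2 V), IsMatchingSet G ↑M ∧ M.card = n}

/-- The subdivision of `G`: each edge `e = uv` is replaced by a new vertex
`Sum.inr e` adjacent exactly to `u` and `v`. -/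
def subdivisionGraph (G : SimpleGraph V) : SimpleGraph (V ⊕ G.edgeSet) :=
  SimpleGraph.fromRel fun a b => match a, b with
    | Sum.inl u, Sum.inr e => u ∈ (e : Sym2 V)
    | _, _ => False

lemma adj_inl' {G : SimpleGraph V} {u : V} {z : V ⊕ G.edgeSet}
    (h : (subdivisionGraph G).Adj (Sum.inl u) z) :
    ∃ e : G.edgeSet, z = Sum.inr e ∧ u ∈ (e : Sym2 V) := by
  cases z with
  | inl v => simp [subdivisionGraph, SimpleGraph.fromRel_adj] at h
  | inr e => exact ⟨e, rfl, by simpa [subdivisionGraph, SimpleGraph.fromRel_adj] using h⟩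

lemma adj_inr' {G : SimpleGraph V} {e : G.edgeSet} {z : V ⊕ G.edgeSet}
    (h : (subdivisionGraph G).Adj (Sum.inr e) z) :
    ∃ u : V, z = Sum.inl u ∧ u ∈ (e : Sym2 V) := by
  cases z with
  | inl v => exact ⟨v, rfl, by simpa [subdivisionGraph, SimpleGraph.fromRel_adj] using h⟩
  | inr f => simp [subdivisionGraph, SimpleGraph.fromRel_adj] at h

theorem stmt_11 [Fintype V] [DecidableEq V] (G : SimpleGraph V) [DecidableRel G.Adj]
    (A : Finset V) (hA : IsIndepVSet G ↑A) (hAmax : A.card = indepNumber G)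
    (M : Finset (Sym2 V)) (hM : IsMatchingSet G ↑M)
    (hMmax : M.card = matchingNumber G) :
    IsOpenPacking (subdivisionGraph G)
      ((Sum.inl '' ↑A) ∪ (Sum.inr '' {e : G.edgeSet | (e : Sym2 V) ∈ M})) ∧
    indepNumber G + matchingNumber G ≤ openPackingNumber (subdivisionGraph G) := by
  classical
  have hpack : IsOpenPacking (subdivisionGraph G)
      ((Sum.inl '' ↑A) ∪ (Sum.inr '' {e : G.edgeSet | (e : Sym2 V) ∈ M})) := by
    intro x hx y hy hxy
    rw [Set.disjoint_left]
    intro z hz1 hz2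
    rcases hx with ⟨u, hu, rfl⟩ | ⟨e, he, rfl⟩ <;>
      rcases hy with ⟨v, hv, rfl⟩ | ⟨f, hf, rfl⟩
    · -- inl u, inl v
      obtain ⟨e, rfl, hue⟩ := adj_inl' hz1
      obtain ⟨e', he', hve⟩ := adj_inl' hz2
      obtain rfl : e = e' := by exact Sum.inr_injective he'.symm ▸ rfl
      have huv : u ≠ v := fun h => hxy (by rw [h])
      have : (e : Sym2 V) = s(u, v) := ((Sym2.mem_and_mem_iff huv).1 ⟨hue, hve⟩)
      exact hA hu hv huv (G.mem_edgeSet.1 (this ▸ e.2))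
    · -- inl u, inr f
      obtain ⟨e, rfl, _⟩ := adj_inl' hz1
      obtain ⟨w, hw, _⟩ := adj_inr' hz2
      exact nomatch hw
    · -- inr e, inl v
      obtain ⟨w, rfl, _⟩ := adj_inr' hz1
      obtain ⟨e', he', _⟩ := adj_inl' hz2
      exact nomatch he'
    · -- inr e, inr f
      obtain ⟨u, rfl, hue⟩ := adj_inr' hz1
      obtain ⟨v, hv, hvf⟩ := adj_inr' hz2
      obtain rfl : u = v := Sum.inl_injective hv
      have hef : (e : Sym2 V) ≠ (f : Sym2 V) := by
        intro h; exact hxy (by rw [Subtype.ext h])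
      exact hM.2 he hf hef u hue hvf
  refine ⟨hpack, ?_⟩
  set T : Finset G.edgeSet := Finset.univ.filter (fun e => (e : Sym2 V) ∈ M) with hT
  set S : Finset (V ⊕ G.edgeSet) := A.image Sum.inl ∪ T.image Sum.inr with hS
  have hcoe : (↑S : Set (V ⊕ G.edgeSet)) =
      (Sum.inl '' ↑A) ∪ (Sum.inr '' {e : G.edgeSet | (e : Sym2 V) ∈ M}) := by
    ext x
    simp [hS, hT, Set.mem_image, Finset.mem_filter]
  have hTM : T.card = M.card := by
    refine Finset.card_bij (fun e _ => (e : Sym2 V)) ?_ ?_ ?_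
    · intro e he; simpa [hT] using he
    · intro e _ f _ h; exact Subtype.ext h
    · intro m hm; exact ⟨⟨m, hM.1 hm⟩, by simpa [hT] using hm, rfl⟩
  have hScard : S.card = A.card + M.card := by
    rw [hS, Finset.card_union_of_disjoint, Finset.card_image_of_injective _ Sum.inl_injective,
      Finset.card_image_of_injective _ Sum.inr_injective, hTM]
    simp [Finset.disjoint_left]
  have hbdd : BddAbove {n | ∃ S : Finset (V ⊕ G.edgeSet),
      IsOpenPacking (subdivisionGraph G) ↑S ∧ S.card = n} := by
    refine ⟨Fintype.card (V ⊕ G.edgeSet), fun n hn => ?_⟩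
    obtain ⟨S', _, rfl⟩ := hn
    exact Finset.card_le_univ S'
  have hmem : A.card + M.card ∈ {n | ∃ S : Finset (V ⊕ G.edgeSet),
      IsOpenPacking (subdivisionGraph G) ↑S ∧ S.card = n} :=
    ⟨S, by rw [hcoe]; exact hpack, hScard⟩
  calc indepNumber G + matchingNumber G = A.card + M.card := by rw [hAmax, hMmax]
    _ ≤ openPackingNumber (subdivisionGraph G) := le_csSup hbdd hmem
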